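/- Let p : X → R be a crossed module of racks (equivalently, a generalized augmented rack: a rack R, an R-set X and an equivariant map p : X → R with p(x·r) = p(x) ◁ r). Then the composite i ∘ p : X → As(R) is an augmented rack: there exists a right group action of As(R) on the set X satisfying x·i(r) = x·r for all x ∈ X, r ∈ R, such that the augmentation identity (i ∘ p)(x·g) = g⁻¹ (i ∘ p)(x) g holds for all x ∈ X and all g ∈ As(R). -/

import Mathlib

/-- A right rack. -/
class RightRack (R : Type*) where
  act : R → R → R
  act_bij : ∀ y : R, Function.Bijective (fun x => act x y)
  self_distrib : ∀ x y z : R, act (act x y) z = act (act x z) (act y z)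

/-- The relations `y⁻¹ x⁻¹ y (x ◁ y)` defining the associated group of a rack. -/
def rackRels (R : Type*) [RightRack R] : Set (FreeGroup R) :=
  {w | ∃ x y : R,
    w = (FreeGroup.of y)⁻¹ * (FreeGroup.of x)⁻¹ * FreeGroup.of y *
        FreeGroup.of (RightRack.act x y)}

/-- The associated group `As(R)` of a rack `R`. -/
def AsGroup (R : Type*) [RightRack R] : Type _ := PresentedGroup (rackRels R)

instance (R : Type*) [RightRack R] : Group (AsGroup R) :=
  inferInstanceAs (Group (PresentedGroup (rackRels R)))

/-- The canonical map `i : R → As(R)`. -/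
def asOf {R : Type*} [RightRack R] (r : R) : AsGroup R :=
  PresentedGroup.of (rels := rackRels R) r

/-- A generalized augmented rack: a rack `R`, an `R`-set `X` and a map `p : X → R`
satisfying `p (x · r) = p(x) ◁ r` (equivalently, a crossed module of racks). -/
structure GenAugRack (X R : Type*) [RightRack R] where
  smul : X → R → X
  smul_bij : ∀ r : R, Function.Bijective (fun x => smul x r)
  smul_act : ∀ (x : X) (r r' : R),
    smul (smul x r) r' = smul (smul x r') (RightRack.act r r')
  p : X → R
  aug : ∀ (x : X) (r : R), p (smul x r) = RightRack.act (p x) r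

/-- for a crossed module of racks (equivalently a generalized augmented
rack) `p : X → R`, the composite `i ∘ p : X → As(R)` is an augmented rack: there is a
right group action `ρ` of `As(R)` on `X` with `x · i(r) = x · r`, satisfying the
augmentation identity `(i ∘ p)(x · g) = g⁻¹ (i ∘ p)(x) g`. -/
theorem genAugRack_gives_augmented_rack_over_asGroup (X R : Type*) [RightRack R]
    (A : GenAugRack X R) :
    ∃ ρ : X → AsGroup R → X,
      (∀ x : X, ρ x 1 = x) ∧
      (∀ (x : X) (g h : AsGroup R), ρ (ρ x g) h = ρ x (g * h)) ∧
      (∀ (x : X) (r : R), ρ x (asOf r) = A.smul x r) ∧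
      (∀ (x : X) (g : AsGroup R),
        asOf (A.p (ρ x g)) = g⁻¹ * asOf (A.p x) * g) := by
  classical
  -- permutation associated to each rack element
  let s : R → Equiv.Perm X := fun r => Equiv.ofBijective _ (A.smul_bij r)
  have hsapp : ∀ (r : R) (x : X), s r x = A.smul x r := fun _ _ => rfl
  let f : R → (Equiv.Perm X)ᵐᵒᵖ := fun r => MulOpposite.op (s r)
  have key : ∀ x y : R, s (RightRack.act x y) * s y = s y * s x := by
    intro x y
    ext v
    simp only [Equiv.Perm.mul_apply, hsapp]
    exact (A.smul_act v x y).symm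
  have hrel : ∀ w ∈ rackRels R, FreeGroup.lift f w = 1 := by
    rintro w ⟨x, y, rfl⟩
    simp only [map_mul, map_inv, FreeGroup.lift_apply_of, f]
    rw [← MulOpposite.op_inv, ← MulOpposite.op_inv, ← MulOpposite.op_mul,
      ← MulOpposite.op_mul, ← MulOpposite.op_mul, MulOpposite.op_eq_one_iff]
    rw [← mul_assoc (s (RightRack.act x y)), key x y]
    group
  let φ : AsGroup R →* (Equiv.Perm X)ᵐᵒᵖ := PresentedGroup.toGroup hrel
  refine ⟨fun x g => (φ g).unop x, ?_, ?_, ?_, ?_⟩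
  · intro x; show (φ 1).unop x = x; rw [show φ 1 = 1 from φ.map_one]; rfl
  · intro x g h
    simp only [map_mul, MulOpposite.unop_mul, Equiv.Perm.mul_apply]
  · intro x r
    show ((φ (asOf r)).unop) x = A.smul x r
    rw [show φ (asOf r) = f r from PresentedGroup.toGroup.of hrel]
    rfl
  · -- augmentation identity
    have conj_rel : ∀ x y : R,
        asOf (RightRack.act x y) = (asOf y)⁻¹ * asOf x * asOf y := by
      intro x y
      have hw : ((FreeGroup.of y)⁻¹ * (FreeGroup.of x)⁻¹ * FreeGroup.of y *
          FreeGroup.of (RightRack.act x y)) ∈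
          Subgroup.normalClosure (rackRels R) :=
        Subgroup.subset_normalClosure ⟨x, y, rfl⟩
      have h1 : (asOf y)⁻¹ * (asOf x)⁻¹ * asOf y * asOf (RightRack.act x y)
          = (1 : AsGroup R) := by
        have := (QuotientGroup.eq_one_iff (N := Subgroup.normalClosure (rackRels R))
          _).mpr hw
        exact this
      have := mul_eq_one_iff_inv_eq.mp h1
      rw [← this]; group
    have gen : ∀ (x : X) (r : R),
        asOf (A.p ((φ (asOf r)).unop x)) = (asOf r)⁻¹ * asOf (A.p x) * asOf r := by
      intro x r
      have hφ : φ (asOf r) = f r := PresentedGroup.toGroup.of hrel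
      rw [hφ]
      show asOf (A.p (A.smul x r)) = _
      rw [A.aug, conj_rel]
    suffices H : ∀ (g : AsGroup R) (x : X),
        asOf (A.p ((φ g).unop x)) = g⁻¹ * asOf (A.p x) * g by
      intro x g; exact H g x
    have Hinv : ∀ g : AsGroup R,
        (∀ x : X, asOf (A.p ((φ g).unop x)) = g⁻¹ * asOf (A.p x) * g) →
        ∀ x : X, asOf (A.p ((φ g⁻¹).unop x)) = g * asOf (A.p x) * g⁻¹ := by
      intro g hg x
      have hx : (φ g).unop ((φ g⁻¹).unop x) = x := by
        rw [← Equiv.Perm.mul_apply, ← MulOpposite.unop_mul, ← map_mul,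
          inv_mul_cancel, map_one, MulOpposite.unop_one, Equiv.Perm.one_apply]
      have := hg ((φ g⁻¹).unop x)
      rw [hx] at this
      rw [this]; group
    have Hmul : ∀ g h : AsGroup R,
        (∀ x : X, asOf (A.p ((φ g).unop x)) = g⁻¹ * asOf (A.p x) * g) →
        (∀ x : X, asOf (A.p ((φ h).unop x)) = h⁻¹ * asOf (A.p x) * h) →
        ∀ x : X, asOf (A.p ((φ (g * h)).unop x)) = (g * h)⁻¹ * asOf (A.p x) * (g * h) := by
      intro g h hg hh x
      rw [map_mul, MulOpposite.unop_mul, Equiv.Perm.mul_apply, hh, hg]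
      group
    intro g
    induction g using PresentedGroup.induction_on with
    | H z =>
      induction z using FreeGroup.induction_on with
      | C1 =>
        intro x
        show asOf (A.p ((φ 1).unop x)) = _
        simp
        exact (by group : asOf (A.p x) = (1 : AsGroup R)⁻¹ * asOf (A.p x) * 1)
      | of r => exact fun x => gen x r
      | inv_of r _ =>
        rw [map_inv]
        have hmk : (PresentedGroup.mk (rackRels R) (FreeGroup.of r) : AsGroup R) = asOf r := rfl
        rw [hmk]
        exact Hinv _ (fun x => gen x r)
      | mul a b ha hb =>
        rw [map_mul]
        exact Hmul _ _ ha hb
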